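/- Let E be a Hausdorff locally convex topological vector space and x̂ ∈ [C]^× for some set C of real-valued functions on E, each Gateaux differentiable at x̂, such that the weak-star closed convex hull of { d_Gφ(x̂) : φ ∈ C } is weak-star compact in E*. Then T_C(x̂) ≠ ∅ if and only if inf_{φ ∈ C} φ(x̂) = 0. -/

import Mathlib

open Topology Filter Set

noncomputable section

section Defs

variable {E : Type*} [AddCommGroup E] [Module ℝ E] [TopologicalSpace E]

/-- The canonical map from the topological dual of `E` to the weak-star dual. -/
def toWD (φ : E →L[ℝ] ℝ) : WeakDual ℝ E := φ

/-- The weak-star closed convex hull of a set of continuous linear functionals. -/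
def wcch (B : Set (E →L[ℝ] ℝ)) : Set (WeakDual ℝ E) :=
  closure (convexHull ℝ (toWD '' B))

/-- `f` is Gateaux differentiable at `x` with Gateaux-differential `f'`. -/
def HasGateauxAt (f : E → ℝ) (f' : E →L[ℝ] ℝ) (x : E) : Prop :=
  ∀ v : E, Tendsto (fun t : ℝ => (f (x + t • v) - f x - t * f' v) / t) (𝓝[>] 0) (𝓝 0)

/-- The family `C` is equi-Gateaux differentiable at `x`, with differentials given by `D`. -/
def EquiGateauxAt (C : Set (E → ℝ)) (D : (E → ℝ) → E →L[ℝ] ℝ) (x : E) : Prop :=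
  (∀ φ ∈ C, HasGateauxAt φ (D φ) x) ∧
  ∀ v : E, ∀ ε : ℝ, 0 < ε → ∃ δ : ℝ, 0 < δ ∧ ∀ t : ℝ, 0 < t → t < δ →
    ∀ φ ∈ C, |(φ (x + t • v) - φ x - t * (D φ) v) / t| ≤ ε

/-- The family `C` is equi-lower semicontinuous at `x`. -/
def EquiLscAt (C : Set (E → ℝ)) (x : E) : Prop :=
  ∀ ε : ℝ, 0 < ε → ∃ O ∈ 𝓝 x, ∀ y ∈ O, ∀ φ ∈ C, φ y - φ x > -ε

/-- `[C]^× = {x ∈ E : φ(x) ≥ 0 for all φ ∈ C}`. -/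
def polarSet (C : Set (E → ℝ)) : Set E := {x | ∀ φ ∈ C, 0 ≤ φ x}

/-- The multiplier set `T_C(x̂)`. -/
def multSet (C : Set (E → ℝ)) (D : (E → ℝ) → E →L[ℝ] ℝ) (x : E) : Set (WeakDual ℝ E) :=
  ⋂ n ∈ {n : ℕ | 1 ≤ n}, wcch (D '' {φ | φ ∈ C ∧ φ x ∈ Icc (0:ℝ) (1/(n:ℝ))})

/-- `F` is weak-admissible at `x ∈ F`, determined by `C` (with differentials `D`). -/
def WeakAdmissibleAt (F : Set E) (C : Set (E → ℝ)) (D : (E → ℝ) → E →L[ℝ] ℝ) (x : E) : Prop :=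
  x ∈ F ∧ C.Nonempty ∧ F = polarSet C ∧ EquiGateauxAt C D x ∧
    ({φ | φ ∈ C ∧ φ x ≠ 0} = ∅ ∨ EquiLscAt {φ | φ ∈ C ∧ φ x ≠ 0} x) ∧
    IsCompact (wcch (D '' C))

end Defs

section NormedDefs

variable {Y : Type*} [NormedAddCommGroup Y] [NormedSpace ℝ Y]

/-- `A` is admissible at `x ∈ A`, determined by `C` (with differentials `D`). -/
def AdmissibleAt (A : Set Y) (C : Set (Y → ℝ)) (D : (Y → ℝ) → Y →L[ℝ] ℝ) (x : Y) : Prop :=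
  x ∈ A ∧ C.Nonempty ∧ A = polarSet C ∧ EquiGateauxAt C D x ∧
    (∃ r : NNReal, ∃ ε : ℝ, 0 < ε ∧ ∀ φ ∈ C, LipschitzOnWith r φ (Metric.ball x ε)) ∧
    toWD (0 : Y →L[ℝ] ℝ) ∉ wcch (D '' C)

/-- The recession cone of a set. -/
def recCone (K : Set Y) : Set Y := {v | ∀ l : ℝ, 0 < l → ∀ x ∈ K, x + l • v ∈ K}

/-- The barrier cone of `K`: functionals bounded above on `K`. -/
def barCone (K : Set Y) : Set (Y →L[ℝ] ℝ) := {φ | BddAbove (φ '' K)}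

/-- The dual positive cone `A*`. -/
def posDualCone (A : Set Y) : Set (Y →L[ℝ] ℝ) := {φ | ∀ y ∈ A, 0 ≤ φ y}

end NormedDefs

/-- If `xh ∈ [C]^×`, each `φ ∈ C` is Gateaux differentiable at `xh` and the
weak-star closed convex hull of `{d_Gφ(xh) : φ ∈ C}` is weak-star compact, then
`T_C(xh) ≠ ∅` iff `inf_{φ ∈ C} φ(xh) = 0`. -/
theorem multSet_nonempty_iff
    {E : Type*} [AddCommGroup E] [Module ℝ E] [TopologicalSpace E]
    [IsTopologicalAddGroup E] [ContinuousSMul ℝ E] [LocallyConvexSpace ℝ E] [T2Space E]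
    (C : Set (E → ℝ)) (hC : C.Nonempty) (D : (E → ℝ) → E →L[ℝ] ℝ) (xh : E)
    (hx : xh ∈ polarSet C)
    (hdiff : ∀ φ ∈ C, HasGateauxAt φ (D φ) xh)
    (hcpt : IsCompact (wcch (D '' C))) :
    (multSet C D xh).Nonempty ↔ sInf ((fun φ => φ xh) '' C) = 0 := by
  have hbdd : BddBelow ((fun φ => φ xh) '' C) := ⟨0, by
    rintro y ⟨φ, hφ, rfl⟩; exact hx φ hφ⟩
  have hne : ((fun φ => φ xh) '' C).Nonempty := hC.image _
  have hinf0 : 0 ≤ sInf ((fun φ => φ xh) '' C) :=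
    le_csInf hne (by rintro y ⟨φ, hφ, rfl⟩; exact hx φ hφ)
  constructor
  · rintro ⟨ψ, hψ⟩
    by_contra h
    have hpos : 0 < sInf ((fun φ => φ xh) '' C) := lt_of_le_of_ne hinf0 (Ne.symm h)
    obtain ⟨n, hn⟩ := exists_nat_one_div_lt hpos
    have hmem : ψ ∈ wcch (D '' {φ | φ ∈ C ∧ φ xh ∈ Icc (0:ℝ) (1/((n+1:ℕ):ℝ))}) := by
      simp only [multSet, mem_iInter, mem_setOf_eq] at hψ
      exact hψ (n+1) (Nat.succ_le_succ (Nat.zero_le n))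
    have hempty : {φ | φ ∈ C ∧ φ xh ∈ Icc (0:ℝ) (1/((n+1:ℕ):ℝ))} = (∅ : Set (E → ℝ)) := by
      ext φ
      simp only [mem_setOf_eq, mem_Icc, mem_empty_iff_false, iff_false]
      rintro ⟨hφC, -, hle⟩
      have hle2 : sInf ((fun φ => φ xh) '' C) ≤ φ xh := csInf_le hbdd ⟨φ, hφC, rfl⟩
      push_cast at hn hle
      linarith
    rw [hempty] at hmem
    simp only [wcch, image_empty, convexHull_empty, closure_empty,
      mem_empty_iff_false] at hmem
  · intro hinf
    set W : ℕ → Set (WeakDual ℝ E) := fun m =>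
      wcch (D '' {φ | φ ∈ C ∧ φ xh ∈ Icc (0:ℝ) (1/((m+1:ℕ):ℝ))}) with hW
    have hWsub : ∀ m k : ℕ, m ≤ k → W k ⊆ W m := by
      intro m k hmk
      apply closure_mono
      apply convexHull_mono
      apply image_mono
      apply image_mono
      intro φ hφ
      refine ⟨hφ.1, hφ.2.1, le_trans hφ.2.2 ?_⟩
      apply one_div_le_one_div_of_le
      · positivity
      · have : ((m:ℝ)) ≤ (k:ℝ) := Nat.cast_le.mpr hmk
        push_cast; linarith
    have hWne : ∀ m, (W m).Nonempty := by
      intro m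
      have hlt : sInf ((fun φ => φ xh) '' C) < 1/((m+1:ℕ):ℝ) := by
        rw [hinf]; positivity
      obtain ⟨y, ⟨φ, hφC, rfl⟩, hylt⟩ := (csInf_lt_iff hbdd hne).mp hlt
      refine ⟨toWD (D φ), subset_closure (subset_convexHull ℝ _ ?_)⟩
      exact ⟨D φ, ⟨φ, ⟨hφC, hx φ hφC, le_of_lt hylt⟩, rfl⟩, rfl⟩
    have hWc : ∀ m, IsClosed (W m) := fun m => isClosed_closure
    have hW0 : IsCompact (W 0) := by
      apply hcpt.of_isClosed_subset (hWc 0)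
      apply closure_mono
      apply convexHull_mono
      apply image_mono
      exact image_mono fun φ hφ => hφ.1
    obtain ⟨ψ, hψ⟩ := IsCompact.nonempty_iInter_of_sequence_nonempty_isCompact_isClosed
      W (fun i => hWsub i (i+1) (Nat.le_succ i)) hWne hW0 hWc
    refine ⟨ψ, ?_⟩
    simp only [multSet, mem_iInter, mem_setOf_eq]
    intro n hn
    have := mem_iInter.mp hψ (n - 1)
    simp only [hW, Nat.sub_add_cancel hn] at this
    exact this
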